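/- Let x₁, x₂, n₁, n₂ ∈ ℝ³ with ‖n₁‖ = 1, ‖n₂‖ = 1, and suppose the three vectors x₂ - x₁, n₁, n₂ are linearly independent (hence form a basis of ℝ³). Let c₁, c₂, c₃, c₄ ∈ ℝ be such that for all ẋ₁, ẋ₂, ṅ₁, ṅ₂ ∈ ℝ³ satisfying ⟪ṅ₁, n₁⟫ = 0 and ⟪ṅ₂, n₂⟫ = 0, one has c₁·(⟪ẋ₂ - ẋ₁, n₁⟫ + ⟪x₂ - x₁, ṅ₁⟫) + c₂·(⟪ẋ₂ - ẋ₁, n₂⟫ + ⟪x₂ - x₁, ṅ₂⟫) + c₃·2⟪ẋ₂ - ẋ₁, x₂ - x₁⟫ + c₄·(⟪ṅ₁, n₂⟫ + ⟪n₁, ṅ₂⟫) = 0. Then c₁ = c₂ = c₃ = c₄ = 0. That is, the differentials of ι₁, ι₂, ι₃, ι₄ at such a point of M₃ × M₃ are linearly independent on the tangent space. -/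

import Mathlib

open scoped RealInnerProductSpace

/-- At a point of `M₃ × M₃` where `x₂ - x₁, n₁, n₂` form a basis of `ℝ³`, the
differentials of the four invariants `ι₁, ι₂, ι₃, ι₄` are linearly independent
on the tangent space (tangent vectors `((dx₁, dn₁), (dx₂, dn₂))` satisfy
`⟪dn₁, n₁⟫ = 0` and `⟪dn₂, n₂⟫ = 0`). -/
theorem differentials_linearly_independent
    (x₁ x₂ n₁ n₂ : EuclideanSpace ℝ (Fin 3)) (hn₁ : ‖n₁‖ = 1) (hn₂ : ‖n₂‖ = 1)
    (hbasis : LinearIndependent ℝ ![x₂ - x₁, n₁, n₂])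
    (c₁ c₂ c₃ c₄ : ℝ)
    (h : ∀ dx₁ dx₂ dn₁ dn₂ : EuclideanSpace ℝ (Fin 3), ⟪dn₁, n₁⟫ = 0 → ⟪dn₂, n₂⟫ = 0 →
      c₁ * (⟪dx₂ - dx₁, n₁⟫ + ⟪x₂ - x₁, dn₁⟫) +
      c₂ * (⟪dx₂ - dx₁, n₂⟫ + ⟪x₂ - x₁, dn₂⟫) +
      c₃ * (2 * ⟪dx₂ - dx₁, x₂ - x₁⟫) +
      c₄ * (⟪dn₁, n₂⟫ + ⟪n₁, dn₂⟫) = 0) :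
    c₁ = 0 ∧ c₂ = 0 ∧ c₃ = 0 ∧ c₄ = 0 := by
  have hn₁' : ⟪n₁, n₁⟫ = 1 := by
    rw [real_inner_self_eq_norm_sq, hn₁]; norm_num
  -- Step 1: c₁, c₂, c₃
  have hvec : (c₁ • n₁ + c₂ • n₂ + (2 * c₃) • (x₂ - x₁) : EuclideanSpace ℝ (Fin 3)) = 0 := by
    apply ext_inner_left ℝ
    intro v
    have := h 0 v 0 0 (by simp) (by simp)
    simp only [sub_zero, inner_zero_left, inner_zero_right, mul_zero, add_zero] at this
    simp only [inner_add_right, inner_smul_right, inner_zero_right]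
    linarith [this]
  have hli := Fintype.linearIndependent_iff.mp hbasis
  have h123 := hli ![2 * c₃, c₁, c₂] (by
    simp only [Fin.sum_univ_three, Matrix.cons_val_zero, Matrix.cons_val_one, Matrix.head_cons,
      Matrix.cons_val_two, Matrix.tail_cons]
    linear_combination (norm := module) hvec)
  have hc₁ : c₁ = 0 := h123 1
  have hc₂ : c₂ = 0 := h123 2
  have hc₃ : c₃ = 0 := by
    have h0 := h123 0
    simp only [Matrix.cons_val_zero] at h0
    linarith
  refine ⟨hc₁, hc₂, hc₃, ?_⟩
  -- Step 2: c₄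
  set w : EuclideanSpace ℝ (Fin 3) := n₂ - ⟪n₂, n₁⟫ • n₁ with hw
  have hwn₁ : ⟪w, n₁⟫ = 0 := by
    simp [hw, inner_sub_left, inner_smul_left, hn₁', hn₁]
  have hwne : w ≠ 0 := by
    intro h0
    have hn2eq : n₂ = ⟪n₂, n₁⟫ • n₁ := by
      rwa [hw, sub_eq_zero] at h0
    have := hli ![0, ⟪n₂, n₁⟫, -1] (by
      simp only [Fin.sum_univ_three, Matrix.cons_val_zero, Matrix.cons_val_one, Matrix.head_cons,
        Matrix.cons_val_two, Matrix.tail_cons]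
      linear_combination (norm := module) hn2eq.symm)
    have h2 := this 2
    change (-1 : ℝ) = 0 at h2
    norm_num at h2
  have key : ⟪w, n₂⟫ = ⟪w, w⟫ := by
    conv_rhs => rw [hw]
    rw [inner_sub_right, real_inner_smul_right, hwn₁, mul_zero, sub_zero]
  have hwn₂ : ⟪w, n₂⟫ ≠ 0 := by
    rw [key]
    exact fun hh => hwne (inner_self_eq_zero.mp hh)
  have h4 := h 0 0 w 0 hwn₁ (by simp)
  simp only [sub_zero, sub_self, inner_zero_left, inner_zero_right, mul_zero, add_zero,
    zero_add] at h4
  rw [hc₁, zero_mul, zero_add] at h4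
  exact (mul_eq_zero.mp h4).resolve_right hwn₂
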